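/- Let 𝔽_q be a finite field of characteristic 2, and let C be a plane conic over 𝔽_q defined by a homogeneous polynomial F ∈ 𝔽_q[x,y,z] of degree 2 having no singular points over the algebraic closure of 𝔽_q. Then C is tangent-filling over 𝔽_q: every point P ∈ ℙ²(𝔽_q) lies on the tangent line T_Q C at some smooth 𝔽_q-point Q of C. -/

import Mathlib

open MvPolynomial

/-- `Q` is a smooth point (given by a nonzero coordinate representative) of the plane
curve defined by the homogeneous polynomial `F`. -/
def SmoothPoint {K : Type*} [CommRing K] (F : MvPolynomial (Fin 3) K) (Q : Fin 3 → K) : Prop :=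
  Q ≠ 0 ∧ eval Q F = 0 ∧ ∃ i : Fin 3, eval Q (pderiv i F) ≠ 0

/-- The point with coordinates `P` lies on the tangent line to the curve `{F = 0}` at the
point with coordinates `Q`. -/
def OnTangentLine {K : Type*} [CommRing K] (F : MvPolynomial (Fin 3) K) (Q P : Fin 3 → K) : Prop :=
  eval Q (pderiv 0 F) * P 0 + eval Q (pderiv 1 F) * P 1 + eval Q (pderiv 2 F) * P 2 = 0

/-- The curve `{F = 0}` is tangent-filling: every point of the projective plane lies on the
tangent line at some smooth point of the curve. -/
def TangentFilling {K : Type*} [CommRing K] (F : MvPolynomial (Fin 3) K) : Prop :=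
  ∀ P : Fin 3 → K, P ≠ 0 → ∃ Q : Fin 3 → K, SmoothPoint F Q ∧ OnTangentLine F Q P

/-! ### Auxiliary material -/

/-- The generic conic `a x² + b y² + c z² + d xy + e yz + f xz`. -/
noncomputable def ConicAux {K : Type*} [CommRing K] (a b c d e f : K) :
    MvPolynomial (Fin 3) K :=
  monomial (Finsupp.single 0 2) a + monomial (Finsupp.single 1 2) b
    + monomial (Finsupp.single 2 2) c
    + monomial (Finsupp.single 0 1 + Finsupp.single 1 1) d
    + monomial (Finsupp.single 1 1 + Finsupp.single 2 1) e
    + monomial (Finsupp.single 0 1 + Finsupp.single 2 1) f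

lemma eval_ConicAux {K : Type*} [CommRing K] (a b c d e f : K) (x : Fin 3 → K) :
    eval x (ConicAux a b c d e f) =
      a * x 0 ^ 2 + b * x 1 ^ 2 + c * x 2 ^ 2
        + d * (x 0 * x 1) + e * (x 1 * x 2) + f * (x 0 * x 2) := by
  simp [ConicAux, eval_monomial, Finsupp.prod_add_index, Finsupp.prod_single_index,
    Fin.prod_univ_three, Finsupp.single_apply]

lemma pderiv_ConicAux_0 {K : Type*} [CommRing K] (a b c d e f : K) (x : Fin 3 → K) :
    eval x (pderiv 0 (ConicAux a b c d e f)) = 2 * a * x 0 + d * x 1 + f * x 2 := by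
  simp [ConicAux, pderiv_monomial, eval_monomial, Finsupp.prod_add_index,
    Finsupp.prod_single_index, Finsupp.single_apply, Fin.prod_univ_three]
  ring

lemma pderiv_ConicAux_1 {K : Type*} [CommRing K] (a b c d e f : K) (x : Fin 3 → K) :
    eval x (pderiv 1 (ConicAux a b c d e f)) = d * x 0 + 2 * b * x 1 + e * x 2 := by
  simp [ConicAux, pderiv_monomial, eval_monomial, Finsupp.prod_add_index,
    Finsupp.prod_single_index, Finsupp.single_apply, Fin.prod_univ_three]
  ring

lemma pderiv_ConicAux_2 {K : Type*} [CommRing K] (a b c d e f : K) (x : Fin 3 → K) :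
    eval x (pderiv 2 (ConicAux a b c d e f)) = f * x 0 + e * x 1 + 2 * c * x 2 := by
  simp [ConicAux, pderiv_monomial, eval_monomial, Finsupp.prod_add_index,
    Finsupp.prod_single_index, Finsupp.single_apply, Fin.prod_univ_three]
  ring

lemma map_ConicAux {K L : Type*} [CommRing K] [CommRing L] (φ : K →+* L) (a b c d e f : K) :
    MvPolynomial.map φ (ConicAux a b c d e f) =
      ConicAux (φ a) (φ b) (φ c) (φ d) (φ e) (φ f) := by
  simp [ConicAux, map_monomial]

lemma fin3_eq_iff_aux (m n : Fin 3 →₀ ℕ) : m = n ↔ m 0 = n 0 ∧ m 1 = n 1 ∧ m 2 = n 2 := by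
  constructor
  · rintro rfl; exact ⟨rfl, rfl, rfl⟩
  · rintro ⟨h0, h1, h2⟩; ext i; fin_cases i <;> assumption

lemma fin3_degree_aux (m : Fin 3 →₀ ℕ) : m.degree = m 0 + m 1 + m 2 := by
  have : m.degree = ∑ i : Fin 3, m i := by
    rw [Finsupp.degree]
    exact Finset.sum_subset (Finset.subset_univ _)
      (fun i _ hi => Finsupp.notMem_support_iff.mp hi)
  rw [this, Fin.sum_univ_three]

lemma fin3_classify_aux (m : Fin 3 →₀ ℕ) (h : m 0 + m 1 + m 2 = 2) :
    m = Finsupp.single 0 2 ∨ m = Finsupp.single 1 2 ∨ m = Finsupp.single 2 2 ∨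
    m = Finsupp.single 0 1 + Finsupp.single 1 1 ∨
    m = Finsupp.single 1 1 + Finsupp.single 2 1 ∨
    m = Finsupp.single 0 1 + Finsupp.single 2 1 := by
  have hm : m = Finsupp.single 0 (m 0) + Finsupp.single 1 (m 1) + Finsupp.single 2 (m 2) := by
    ext i; fin_cases i <;> simp [Finsupp.single_apply]
  have h0 : m 0 ≤ 2 := by omega
  have h1 : m 1 ≤ 2 := by omega
  have h2 : m 2 ≤ 2 := by omega
  set x := m 0 with hx; set y := m 1 with hy; set z := m 2 with hz
  clear_value x y z
  interval_cases x <;> interval_cases y <;> interval_cases z <;>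
    first | omega | simp [hm]

lemma ConicAux_structure {K : Type*} [CommRing K] (F : MvPolynomial (Fin 3) K)
    (hF : F.IsHomogeneous 2) :
    F = ConicAux (coeff (Finsupp.single 0 2) F) (coeff (Finsupp.single 1 2) F)
      (coeff (Finsupp.single 2 2) F)
      (coeff (Finsupp.single 0 1 + Finsupp.single 1 1) F)
      (coeff (Finsupp.single 1 1 + Finsupp.single 2 1) F)
      (coeff (Finsupp.single 0 1 + Finsupp.single 2 1) F) := by
  rw [ConicAux]
  ext m
  by_cases hdeg : m 0 + m 1 + m 2 = 2
  · rcases fin3_classify_aux m hdeg with h | h | h | h | h | h <;> subst h <;>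
      simp [coeff_monomial, fin3_eq_iff_aux, Finsupp.single_apply]
  · have hL : coeff m F = 0 := hF.coeff_eq_zero (by rw [fin3_degree_aux]; exact hdeg)
    rw [hL]
    simp only [coeff_add, coeff_monomial]
    have hne : ∀ n : Fin 3 →₀ ℕ, n 0 + n 1 + n 2 = 2 → ¬ (n = m) := by
      rintro n hn rfl; exact hdeg hn
    rw [if_neg (hne _ (by simp)), if_neg (hne _ (by simp)), if_neg (hne _ (by simp)),
      if_neg (hne _ (by simp [Finsupp.single_apply])),
      if_neg (hne _ (by simp [Finsupp.single_apply])),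
      if_neg (hne _ (by simp [Finsupp.single_apply]))]
    ring

theorem smooth_conic_char_two_tangent_filling
    (K : Type*) [Field K] [Fintype K] (hchar : ringChar K = 2)
    (F : MvPolynomial (Fin 3) K) (hF : F.IsHomogeneous 2)
    -- the conic has no singular point over the algebraic closure:
    (hsmooth : ∀ P : Fin 3 → AlgebraicClosure K, P ≠ 0 →
      ¬ (eval P (MvPolynomial.map (algebraMap K (AlgebraicClosure K)) F) = 0 ∧
        ∀ i : Fin 3,
          eval P (pderiv i (MvPolynomial.map (algebraMap K (AlgebraicClosure K)) F)) = 0)) :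
    TangentFilling F := by
  classical
  have h2K : (2 : K) = 0 := by
    have h := ringChar.Nat.cast_ringChar (R := K)
    rw [hchar] at h; exact_mod_cast h
  have sq : ∀ x : K, ∃ s : K, s ^ 2 = x := by
    have hinj : Function.Injective (fun x : K => x ^ 2) := by
      intro x y hxy
      simp only at hxy
      have h0 : (x - y) ^ 2 = 0 := by linear_combination hxy + (y ^ 2 - x * y) * h2K
      have hxy0 := pow_eq_zero_iff (by norm_num : 2 ≠ 0) |>.mp h0
      linear_combination hxy0
    intro x; exact Finite.injective_iff_surjective.mp hinj x
  obtain ⟨a, b, c, d, e, f, hFG⟩ :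
      ∃ a b c d e f : K, F = ConicAux a b c d e f :=
    ⟨_, _, _, _, _, _, ConicAux_structure F hF⟩
  have h2L : (2 : AlgebraicClosure K) = 0 := by
    rw [show (2 : AlgebraicClosure K) = algebraMap K (AlgebraicClosure K) 2 from
      (map_ofNat _ 2).symm, h2K, map_zero]
  have φinj : Function.Injective (algebraMap K (AlgebraicClosure K)) :=
    (algebraMap K (AlgebraicClosure K)).injective
  -- transfer of singular K-points to the closure
  have push : ∀ Q : Fin 3 → K, Q ≠ 0 →
      a*Q 0^2 + b*Q 1^2 + c*Q 2^2 + d*(Q 0*Q 1) + e*(Q 1*Q 2) + f*(Q 0*Q 2) = 0 →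
      2*a*Q 0 + d*Q 1 + f*Q 2 = 0 → d*Q 0 + 2*b*Q 1 + e*Q 2 = 0 →
      f*Q 0 + e*Q 1 + 2*c*Q 2 = 0 → False := by
    intro Q hQ hFQ hg0 hg1 hg2
    obtain ⟨j, hj⟩ := Function.ne_iff.mp hQ
    refine hsmooth (fun i => algebraMap K (AlgebraicClosure K) (Q i))
      (Function.ne_iff.mpr ⟨j, fun h0 => hj (φinj (by simpa using h0))⟩) ⟨?_, ?_⟩
    · rw [hFG, map_ConicAux, eval_ConicAux]
      simp only [← map_pow, ← map_mul, ← map_add]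
      rw [hFQ, map_zero]
    · have e0 : eval (fun i => algebraMap K (AlgebraicClosure K) (Q i))
          (pderiv 0 (MvPolynomial.map (algebraMap K (AlgebraicClosure K)) F)) = 0 := by
        rw [hFG, map_ConicAux, pderiv_ConicAux_0]
        simp only [show (2 : AlgebraicClosure K) = algebraMap K (AlgebraicClosure K) 2 from
          (map_ofNat _ 2).symm, ← map_mul, ← map_add]
        rw [hg0, map_zero]
      have e1 : eval (fun i => algebraMap K (AlgebraicClosure K) (Q i))
          (pderiv 1 (MvPolynomial.map (algebraMap K (AlgebraicClosure K)) F)) = 0 := by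
        rw [hFG, map_ConicAux, pderiv_ConicAux_1]
        simp only [show (2 : AlgebraicClosure K) = algebraMap K (AlgebraicClosure K) 2 from
          (map_ofNat _ 2).symm, ← map_mul, ← map_add]
        rw [hg1, map_zero]
      have e2 : eval (fun i => algebraMap K (AlgebraicClosure K) (Q i))
          (pderiv 2 (MvPolynomial.map (algebraMap K (AlgebraicClosure K)) F)) = 0 := by
        rw [hFG, map_ConicAux, pderiv_ConicAux_2]
        simp only [show (2 : AlgebraicClosure K) = algebraMap K (AlgebraicClosure K) 2 from
          (map_ofNat _ 2).symm, ← map_mul, ← map_add]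
        rw [hg2, map_zero]
      intro i; fin_cases i
      · exact e0
      · exact e1
      · exact e2
  -- every nonzero rational zero of the conic is a smooth point
  have rat_smooth : ∀ Q : Fin 3 → K, Q ≠ 0 →
      a*Q 0^2 + b*Q 1^2 + c*Q 2^2 + d*(Q 0*Q 1) + e*(Q 1*Q 2) + f*(Q 0*Q 2) = 0 →
      ∃ i, eval Q (pderiv i F) ≠ 0 := by
    intro Q hQ hFQ
    by_contra hcon; push_neg at hcon
    have hg0 := hcon 0; have hg1 := hcon 1; have hg2 := hcon 2
    rw [hFG, pderiv_ConicAux_0] at hg0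
    rw [hFG, pderiv_ConicAux_1] at hg1
    rw [hFG, pderiv_ConicAux_2] at hg2
    exact push Q hQ hFQ hg0 hg1 hg2
  -- the cross coefficients cannot all vanish (else the conic is singular over the closure)
  have hdef : ¬ (d = 0 ∧ e = 0 ∧ f = 0) := by
    rintro ⟨hd0, he0, hf0⟩
    obtain ⟨α, hα⟩ := IsAlgClosed.exists_pow_nat_eq
      (algebraMap K (AlgebraicClosure K) a) (n := 2) (by norm_num)
    obtain ⟨β, hβ⟩ := IsAlgClosed.exists_pow_nat_eq
      (algebraMap K (AlgebraicClosure K) b) (n := 2) (by norm_num)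
    have hφd : algebraMap K (AlgebraicClosure K) d = 0 := by rw [hd0, map_zero]
    have hφe : algebraMap K (AlgebraicClosure K) e = 0 := by rw [he0, map_zero]
    have hφf : algebraMap K (AlgebraicClosure K) f = 0 := by rw [hf0, map_zero]
    by_cases hα0 : α = 0
    · rw [hα0] at hα
      refine hsmooth ![1,0,0] (Function.ne_iff.mpr ⟨0, by simp⟩) ⟨?_, ?_⟩
      · rw [hFG, map_ConicAux, eval_ConicAux]
        simp only [Matrix.cons_val_zero, Matrix.cons_val_one, Matrix.head_cons,
          Matrix.cons_val_two, Matrix.tail_cons]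
        linear_combination -hα
      · have e0 : eval (![1,0,0] : Fin 3 → AlgebraicClosure K)
            (pderiv 0 (MvPolynomial.map (algebraMap K (AlgebraicClosure K)) F)) = 0 := by
          rw [hFG, map_ConicAux, pderiv_ConicAux_0]
          simp only [Matrix.cons_val_zero, Matrix.cons_val_one, Matrix.head_cons,
            Matrix.cons_val_two, Matrix.tail_cons]
          linear_combination (algebraMap K (AlgebraicClosure K) a) * h2L
        have e1 : eval (![1,0,0] : Fin 3 → AlgebraicClosure K)
            (pderiv 1 (MvPolynomial.map (algebraMap K (AlgebraicClosure K)) F)) = 0 := by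
          rw [hFG, map_ConicAux, pderiv_ConicAux_1]
          simp only [Matrix.cons_val_zero, Matrix.cons_val_one, Matrix.head_cons,
            Matrix.cons_val_two, Matrix.tail_cons]
          linear_combination hφd
        have e2 : eval (![1,0,0] : Fin 3 → AlgebraicClosure K)
            (pderiv 2 (MvPolynomial.map (algebraMap K (AlgebraicClosure K)) F)) = 0 := by
          rw [hFG, map_ConicAux, pderiv_ConicAux_2]
          simp only [Matrix.cons_val_zero, Matrix.cons_val_one, Matrix.head_cons,
            Matrix.cons_val_two, Matrix.tail_cons]
          linear_combination hφf
        intro i; fin_cases i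
        · exact e0
        · exact e1
        · exact e2
    · refine hsmooth ![β, α, 0] (Function.ne_iff.mpr ⟨1, by simpa using hα0⟩) ⟨?_, ?_⟩
      · rw [hFG, map_ConicAux, eval_ConicAux]
        simp only [Matrix.cons_val_zero, Matrix.cons_val_one, Matrix.head_cons,
          Matrix.cons_val_two, Matrix.tail_cons]
        linear_combination (-(β^2))*hα - α^2*hβ + (α^2*β^2)*h2L + β*α*hφd
      · have e0 : eval (![β, α, 0] : Fin 3 → AlgebraicClosure K)
            (pderiv 0 (MvPolynomial.map (algebraMap K (AlgebraicClosure K)) F)) = 0 := by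
          rw [hFG, map_ConicAux, pderiv_ConicAux_0]
          simp only [Matrix.cons_val_zero, Matrix.cons_val_one, Matrix.head_cons,
            Matrix.cons_val_two, Matrix.tail_cons]
          linear_combination (algebraMap K (AlgebraicClosure K) a * β)*h2L + α*hφd
        have e1 : eval (![β, α, 0] : Fin 3 → AlgebraicClosure K)
            (pderiv 1 (MvPolynomial.map (algebraMap K (AlgebraicClosure K)) F)) = 0 := by
          rw [hFG, map_ConicAux, pderiv_ConicAux_1]
          simp only [Matrix.cons_val_zero, Matrix.cons_val_one, Matrix.head_cons,
            Matrix.cons_val_two, Matrix.tail_cons]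
          linear_combination β*hφd + (algebraMap K (AlgebraicClosure K) b * α)*h2L
        have e2 : eval (![β, α, 0] : Fin 3 → AlgebraicClosure K)
            (pderiv 2 (MvPolynomial.map (algebraMap K (AlgebraicClosure K)) F)) = 0 := by
          rw [hFG, map_ConicAux, pderiv_ConicAux_2]
          simp only [Matrix.cons_val_zero, Matrix.cons_val_one, Matrix.head_cons,
            Matrix.cons_val_two, Matrix.tail_cons]
          linear_combination β*hφf + α*hφe
        intro i; fin_cases i
        · exact e0
        · exact e1
        · exact e2
  -- value of the conic at the nucleus `(e, f, d)` is nonzero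
  have hFN : a*e^2 + b*f^2 + c*d^2 + d*(e*f) + e*(f*d) + f*(e*d) ≠ 0 := by
    intro hz
    have hNne : (![e,f,d] : Fin 3 → K) ≠ 0 := by
      intro h0
      exact hdef ⟨congrFun h0 2, congrFun h0 0, congrFun h0 1⟩
    refine push ![e,f,d] hNne ?_ ?_ ?_ ?_
    · show a*e^2 + b*f^2 + c*d^2 + d*(e*f) + e*(f*d) + f*(e*d) = 0
      exact hz
    · show 2*a*e + d*f + f*d = 0
      linear_combination (a*e + d*f)*h2K
    · show d*e + 2*b*f + e*d = 0
      linear_combination (d*e + b*f)*h2K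
    · show f*e + e*f + 2*c*d = 0
      linear_combination (e*f + c*d)*h2K
  -- main construction
  intro P hP
  have build : ∀ w0 w1 w2 : K,
      (2*a*P 0 + d*P 1 + f*P 2)*w0 + (d*P 0 + 2*b*P 1 + e*P 2)*w1
        + (f*P 0 + e*P 1 + 2*c*P 2)*w2 = 0 →
      (∀ s : K, ¬ (s*e + w0 = 0 ∧ s*f + w1 = 0 ∧ s*d + w2 = 0)) →
      ∃ Q, SmoothPoint F Q ∧ OnTangentLine F Q P := by
    intro w0 w1 w2 hoW hind
    obtain ⟨s, hs⟩ := sq ((a*w0^2 + b*w1^2 + c*w2^2 + d*(w0*w1) + e*(w1*w2) + f*(w0*w2)) *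
      (a*e^2 + b*f^2 + c*d^2 + d*(e*f) + e*(f*d) + f*(e*d))⁻¹)
    have hs2 : s^2 * (a*e^2 + b*f^2 + c*d^2 + d*(e*f) + e*(f*d) + f*(e*d))
        = a*w0^2 + b*w1^2 + c*w2^2 + d*(w0*w1) + e*(w1*w2) + f*(w0*w2) := by
      rw [hs]; exact inv_mul_cancel_right₀ hFN _
    set Q : Fin 3 → K := ![s*e + w0, s*f + w1, s*d + w2] with hQdef
    have hQ0 : Q 0 = s*e + w0 := rfl
    have hQ1 : Q 1 = s*f + w1 := rfl
    have hQ2 : Q 2 = s*d + w2 := rfl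
    have hQne : Q ≠ 0 := by
      intro h0
      exact hind s ⟨congrFun h0 0, congrFun h0 1, congrFun h0 2⟩
    have hFQ : a*Q 0^2 + b*Q 1^2 + c*Q 2^2 + d*(Q 0*Q 1) + e*(Q 1*Q 2) + f*(Q 0*Q 2) = 0 := by
      rw [hQ0, hQ1, hQ2]
      linear_combination hs2 + (a*w0^2 + b*w1^2 + c*w2^2 + d*(w0*w1) + e*(w1*w2) + f*(w0*w2)
        + s*(a*e*w0 + d*f*w0 + d*e*w1 + b*f*w1 + e*f*w2 + c*d*w2))*h2K
    refine ⟨Q, ⟨hQne, ?_, rat_smooth Q hQne hFQ⟩, ?_⟩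
    · rw [hFG, eval_ConicAux]; exact hFQ
    · show eval Q (pderiv 0 F) * P 0 + eval Q (pderiv 1 F) * P 1 + eval Q (pderiv 2 F) * P 2 = 0
      rw [hFG, pderiv_ConicAux_0, pderiv_ConicAux_1, pderiv_ConicAux_2, hQ0, hQ1, hQ2]
      linear_combination hoW
        + (s*(a*e*P 0 + d*f*P 0 + d*e*P 1 + b*f*P 1 + e*f*P 2 + c*d*P 2))*h2K
  by_cases hva : (2*a*P 0 + d*P 1 + f*P 2 = 0) ∧ (d*P 0 + 2*b*P 1 + e*P 2 = 0)
      ∧ (f*P 0 + e*P 1 + 2*c*P 2 = 0)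
  · -- the gradient at `P` vanishes: any smooth point works
    obtain ⟨hv0, hv1, hv2⟩ := hva
    by_cases he0 : e = 0
    · by_cases hf0 : f = 0
      · -- then d ≠ 0
        have hd0 : d ≠ 0 := fun h => hdef ⟨h, he0, hf0⟩
        refine build 1 0 0 (by linear_combination hv0) ?_
        rintro s ⟨c0, c1, c2⟩
        have hs0 : s = 0 := by
          rcases mul_eq_zero.mp (show s * d = 0 by linear_combination c2) with h | h
          · exact h
          · exact absurd h hd0
        rw [hs0] at c0; simp [he0] at c0
      · refine build 1 0 0 (by linear_combination hv0) ?_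
        rintro s ⟨c0, c1, c2⟩
        have hs0 : s = 0 := by
          rcases mul_eq_zero.mp (show s * f = 0 by linear_combination c1) with h | h
          · exact h
          · exact absurd h hf0
        rw [hs0] at c0; simp [he0] at c0
    · refine build 0 1 0 (by linear_combination hv1) ?_
      rintro s ⟨c0, c1, c2⟩
      have hs0 : s = 0 := by
        rcases mul_eq_zero.mp (show s * e = 0 by linear_combination c0) with h | h
        · exact h
        · exact absurd h he0
      rw [hs0] at c1; simp at c1
  · -- the gradient at `P` is nonzero
    rcases not_and_or.mp hva with hv0 | hrest
    · -- v0 ≠ 0 : candidates (v1, v0, 0) and (v2, 0, v0)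
      by_cases hcand : ∀ s : K, ¬ (s*e + (d*P 0 + 2*b*P 1 + e*P 2) = 0
          ∧ s*f + (2*a*P 0 + d*P 1 + f*P 2) = 0 ∧ s*d + 0 = 0)
      · exact build (d*P 0 + 2*b*P 1 + e*P 2) (2*a*P 0 + d*P 1 + f*P 2) 0
          (by linear_combination ((2*a*P 0 + d*P 1 + f*P 2)*(d*P 0 + 2*b*P 1 + e*P 2))*h2K)
          hcand
      · push_neg at hcand
        obtain ⟨s₂, c0, c1, c2⟩ := hcand
        refine build (f*P 0 + e*P 1 + 2*c*P 2) 0 (2*a*P 0 + d*P 1 + f*P 2)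
          (by linear_combination ((2*a*P 0 + d*P 1 + f*P 2)*(f*P 0 + e*P 1 + 2*c*P 2))*h2K) ?_
        rintro s ⟨d0, d1, d2⟩
        have hfne : f ≠ 0 := by
          intro h; apply hv0; rw [h] at c1; linear_combination c1 + P 2 * h
        have hs0 : s = 0 := by
          rcases mul_eq_zero.mp (show s * f = 0 by linear_combination d1) with h | h
          · exact h
          · exact absurd h hfne
        apply hv0; rw [hs0] at d2; linear_combination d2
    · rcases not_and_or.mp hrest with hv1 | hv2
      · -- v1 ≠ 0 : candidates (v1, v0, 0) and (0, v2, v1)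
        by_cases hcand : ∀ s : K, ¬ (s*e + (d*P 0 + 2*b*P 1 + e*P 2) = 0
            ∧ s*f + (2*a*P 0 + d*P 1 + f*P 2) = 0 ∧ s*d + 0 = 0)
        · exact build (d*P 0 + 2*b*P 1 + e*P 2) (2*a*P 0 + d*P 1 + f*P 2) 0
            (by linear_combination ((2*a*P 0 + d*P 1 + f*P 2)*(d*P 0 + 2*b*P 1 + e*P 2))*h2K)
            hcand
        · push_neg at hcand
          obtain ⟨s₂, c0, c1, c2⟩ := hcand
          refine build 0 (f*P 0 + e*P 1 + 2*c*P 2) (d*P 0 + 2*b*P 1 + e*P 2)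
            (by linear_combination ((d*P 0 + 2*b*P 1 + e*P 2)*(f*P 0 + e*P 1 + 2*c*P 2))*h2K) ?_
          rintro s ⟨d0, d1, d2⟩
          have hene : e ≠ 0 := by
            intro h; apply hv1; rw [h] at c0; linear_combination c0 + P 2 * h
          have hs0 : s = 0 := by
            rcases mul_eq_zero.mp (show s * e = 0 by linear_combination d0) with h | h
            · exact h
            · exact absurd h hene
          apply hv1; rw [hs0] at d2; linear_combination d2
      · -- v2 ≠ 0 : candidates (v2, 0, v0) and (0, v2, v1)
        by_cases hcand : ∀ s : K, ¬ (s*e + (f*P 0 + e*P 1 + 2*c*P 2) = 0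
            ∧ s*f + 0 = 0 ∧ s*d + (2*a*P 0 + d*P 1 + f*P 2) = 0)
        · exact build (f*P 0 + e*P 1 + 2*c*P 2) 0 (2*a*P 0 + d*P 1 + f*P 2)
            (by linear_combination ((2*a*P 0 + d*P 1 + f*P 2)*(f*P 0 + e*P 1 + 2*c*P 2))*h2K)
            hcand
        · push_neg at hcand
          obtain ⟨s₂, c0, c1, c2⟩ := hcand
          refine build 0 (f*P 0 + e*P 1 + 2*c*P 2) (d*P 0 + 2*b*P 1 + e*P 2)
            (by linear_combination ((d*P 0 + 2*b*P 1 + e*P 2)*(f*P 0 + e*P 1 + 2*c*P 2))*h2K) ?_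
          rintro s ⟨d0, d1, d2⟩
          have hene : e ≠ 0 := by
            intro h; apply hv2; rw [h] at c0; linear_combination c0 + P 1 * h
          have hs0 : s = 0 := by
            rcases mul_eq_zero.mp (show s * e = 0 by linear_combination d0) with h | h
            · exact h
            · exact absurd h hene
          apply hv2; rw [hs0] at d1; linear_combination d1
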